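/- With Y = closure of Φ(X) as above, for every d ∈ ℕ the number of words of length d in the language of Y is at most 2(d+1)^3. -/

import Mathlib

open MeasureTheory Filter Topology
open scoped ENNReal

/-- The odometer map on `X = {0,1}^ℕ` (adding one with carry in binary). -/
def Tod (x : ℕ → Bool) : ℕ → Bool := fun k =>
  if ∀ i < k, x i = true then !(x k) else x k

/-- The inverse of the odometer map (subtracting one with borrow). -/
def TodInv (x : ℕ → Bool) : ℕ → Bool := fun k =>
  if ∀ i < k, x i = false then !(x k) else x k

/-- The number determined by the first `k` binary digits of `x`. -/
def DN (k : ℕ) (x : ℕ → Bool) : ℕ := ∑ i ∈ Finset.range k, 2 ^ i * (x i).toNat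

/-- The cylinder `[0^i]` of sequences starting with `i` zeros. -/
def cyl0 (i : ℕ) : Set (ℕ → Bool) := {x | ∀ j < i, x j = false}

/-- `A = ⋃_{i=5}^∞ ⋃_{j=0}^{i-1} T^j([0^i])`. -/
def Aset : Set (ℕ → Bool) := ⋃ (i : ℕ) (_ : 5 ≤ i) (j : ℕ) (_ : j < i), Tod^[j] '' cyl0 i

/-- `A_k = ⋃_{i=5}^{k} ⋃_{j=0}^{i-1} T^j([0^i])`. -/
def Ak (k : ℕ) : Set (ℕ → Bool) :=
  ⋃ (i : ℕ) (_ : 5 ≤ i) (_ : i ≤ k) (j : ℕ) (_ : j < i), Tod^[j] '' cyl0 i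

/-- `E_k = ⋃_{i=k+1}^∞ ⋃_{j=0}^{i-1} T^j([0^i])`. -/
def Ek (k : ℕ) : Set (ℕ → Bool) :=
  ⋃ (i : ℕ) (_ : k + 1 ≤ i) (j : ℕ) (_ : j < i), Tod^[j] '' cyl0 i

/-- `T^n` for `n : ℤ` (using the inverse odometer for negative `n`). -/
def zIter (n : ℤ) (x : ℕ → Bool) : ℕ → Bool :=
  if 0 ≤ n then Tod^[n.toNat] x else TodInv^[(-n).toNat] x

/-- The factor map `Φ : X → Z = {α,β}^ℤ`, with `β = true`, `α = false`:
`Φ(x)_n = β` iff `T^n(x) ∈ A`. -/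
noncomputable def Phi (x : ℕ → Bool) : ℤ → Bool := fun n =>
  @decide (zIter n x ∈ Aset) (Classical.propDecidable _)

/-- The subshift `Y`, the closure of `Φ(X)` in the full two-sided shift. -/
def Ysub : Set (ℤ → Bool) := closure (Set.range Phi)

/-- The shift map on `Z = {α,β}^ℤ`. -/
def shiftZ (z : ℤ → Bool) : ℤ → Bool := fun n => z (n + 1)

/-- The cylinder in `Z` given by a word `w` of length `n` placed at positions `0,…,n-1`. -/
def cylZ (n : ℕ) (w : Fin n → Bool) : Set (ℤ → Bool) :=
  {z | ∀ i : Fin n, z ((i : ℕ) : ℤ) = w i}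

section Aux

lemma DN_succ (i : ℕ) (x : ℕ → Bool) : DN (i+1) x = DN i x + 2^i * (x i).toNat :=
  Finset.sum_range_succ _ _

lemma DN_lt (i : ℕ) (x : ℕ → Bool) : DN i x < 2^i := by
  induction i with
  | zero => simp [DN]
  | succ i ih =>
    rw [DN_succ]
    have hp : 2^(i+1) = 2^i * 2 := pow_succ 2 i
    cases hxi : x i <;> simp [hxi] <;> omega

lemma forall_lt_succ' {P : ℕ → Prop} {i : ℕ} : (∀ j < i+1, P j) ↔ (∀ j < i, P j) ∧ P i := by
  constructor
  · exact fun h => ⟨fun j hj => h j (by omega), h i (by omega)⟩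
  · rintro ⟨h1, h2⟩ j hj
    rcases Nat.lt_succ_iff_lt_or_eq.mp hj with h | h
    · exact h1 j h
    · exact h ▸ h2

lemma DN_eq_zero_iff (i : ℕ) (x : ℕ → Bool) : DN i x = 0 ↔ ∀ j < i, x j = false := by
  induction i with
  | zero => simp [DN]
  | succ i ih =>
    rw [DN_succ, forall_lt_succ', ← ih]
    have h2 : 0 < 2^i := pow_pos (by norm_num) i
    cases hxi : x i <;> simp [hxi] <;> omega

lemma DN_max_iff (i : ℕ) (x : ℕ → Bool) : DN i x = 2^i - 1 ↔ ∀ j < i, x j = true := by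
  induction i with
  | zero => simp [DN]
  | succ i ih =>
    rw [DN_succ, forall_lt_succ', ← ih]
    have hlt := DN_lt i x
    have hp : 2^(i+1) = 2^i * 2 := pow_succ 2 i
    have h2 : 0 < 2^i := pow_pos (by norm_num) i
    cases hxi : x i <;> simp [hxi] <;> omega

lemma DN_Tod (i : ℕ) (x : ℕ → Bool) : DN i (Tod x) = (DN i x + 1) % 2^i := by
  induction i with
  | zero => simp [DN]
  | succ i ih =>
    rw [DN_succ, DN_succ, ih]
    have hlt := DN_lt i x
    have hp : 2^(i+1) = 2^i * 2 := pow_succ 2 i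
    have h2 : 0 < 2^i := pow_pos (by norm_num) i
    have hTod : Tod x i = if ∀ j < i, x j = true then !(x i) else x i := rfl
    by_cases h : ∀ j < i, x j = true
    · have hm : DN i x = 2^i - 1 := (DN_max_iff i x).mpr h
      rw [hTod, if_pos h, hm]
      have e1 : 2^i - 1 + 1 = 2^i := by omega
      rw [e1, Nat.mod_self]
      cases hxi : x i
      · simp only [Bool.not_false, Bool.toNat_true, Bool.toNat_false]
        have : 2^i - 1 + 2^i * 0 + 1 = 2^i := by omega
        rw [this, Nat.mod_eq_of_lt (by omega)]
        omega
      · simp only [Bool.not_true, Bool.toNat_false, Bool.toNat_true]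
        have : 2^i - 1 + 2^i * 1 + 1 = 2^(i+1) := by omega
        rw [this, Nat.mod_self]
        omega
    · have hne : DN i x ≠ 2^i - 1 := fun hh => h ((DN_max_iff i x).mp hh)
      rw [hTod, if_neg h, Nat.mod_eq_of_lt (show DN i x + 1 < 2^i by omega)]
      cases hxi : x i
      · simp only [Bool.toNat_false, mul_zero]
        rw [Nat.mod_eq_of_lt (by omega)]
        omega
      · simp only [Bool.toNat_true, mul_one]
        rw [Nat.mod_eq_of_lt (by omega)]
        omega

lemma DN_Tod_iter (i n : ℕ) (x : ℕ → Bool) : DN i (Tod^[n] x) = (DN i x + n) % 2^i := by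
  induction n with
  | zero => simp [Nat.mod_eq_of_lt (DN_lt i x)]
  | succ n ih =>
    rw [Function.iterate_succ_apply', DN_Tod, ih, Nat.mod_add_mod, ← Nat.add_assoc]

lemma Tod_TodInv (x : ℕ → Bool) : Tod (TodInv x) = x := by
  funext k
  have hTI : ∀ i, TodInv x i = if ∀ j < i, x j = false then !(x i) else x i := fun i => rfl
  have hcond : (∀ i < k, TodInv x i = true) ↔ (∀ i < k, x i = false) := by
    constructor
    · intro h i
      induction i using Nat.strong_induction_on with
      | _ i ih =>
        intro hik
        have hz : ∀ j < i, x j = false := fun j hj => ih j hj (hj.trans hik)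
        have h1 : TodInv x i = !(x i) := by rw [hTI i, if_pos hz]
        have h2 := h i hik
        rw [h1] at h2
        simpa using h2
    · intro h i hik
      have h1 : TodInv x i = !(x i) := by
        rw [hTI i, if_pos (fun j hj => h j (hj.trans hik))]
      rw [h1, h i hik]
      rfl
  show (if ∀ i < k, TodInv x i = true then !(TodInv x k) else TodInv x k) = x k
  by_cases h : ∀ i < k, x i = false
  · rw [if_pos (hcond.mpr h), hTI k, if_pos h, Bool.not_not]
  · rw [if_neg (fun hh => h (hcond.mp hh)), hTI k, if_neg h]

lemma TodInv_Tod (x : ℕ → Bool) : TodInv (Tod x) = x := by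
  funext k
  have hT : ∀ i, Tod x i = if ∀ j < i, x j = true then !(x i) else x i := fun i => rfl
  have hcond : (∀ i < k, Tod x i = false) ↔ (∀ i < k, x i = true) := by
    constructor
    · intro h i
      induction i using Nat.strong_induction_on with
      | _ i ih =>
        intro hik
        have hz : ∀ j < i, x j = true := fun j hj => ih j hj (hj.trans hik)
        have h1 : Tod x i = !(x i) := by rw [hT i, if_pos hz]
        have h2 := h i hik
        rw [h1] at h2
        simpa using h2
    · intro h i hik
      have h1 : Tod x i = !(x i) := by
        rw [hT i, if_pos (fun j hj => h j (hj.trans hik))]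
      rw [h1, h i hik]
      rfl
  show (if ∀ i < k, Tod x i = false then !(Tod x k) else Tod x k) = x k
  by_cases h : ∀ i < k, x i = true
  · rw [if_pos (hcond.mpr h), hT k, if_pos h, Bool.not_not]
  · rw [if_neg (fun hh => h (hcond.mp hh)), hT k, if_neg h]

lemma mem_tower_iff {i j : ℕ} (hj : j < 2^i) (y : ℕ → Bool) :
    y ∈ Tod^[j] '' cyl0 i ↔ DN i y = j := by
  constructor
  · rintro ⟨u, hu, rfl⟩
    have h0 : DN i u = 0 := (DN_eq_zero_iff i u).mpr hu
    rw [DN_Tod_iter, h0, Nat.zero_add, Nat.mod_eq_of_lt hj]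
  · intro h
    have hLI : Function.LeftInverse Tod TodInv := fun z => Tod_TodInv z
    have hiter : Tod^[j] (TodInv^[j] y) = y := hLI.iterate j y
    have hDN := DN_Tod_iter i j (TodInv^[j] y)
    rw [hiter, h] at hDN
    have hs := DN_lt i (TodInv^[j] y)
    have h0 : DN i (TodInv^[j] y) = 0 := by
      set s := DN i (TodInv^[j] y)
      rcases lt_or_ge (s + j) (2^i) with hlt | hge
      · rw [Nat.mod_eq_of_lt hlt] at hDN
        omega
      · rw [Nat.mod_eq_sub_mod hge, Nat.mod_eq_of_lt (by omega)] at hDN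
        omega
    exact ⟨TodInv^[j] y, (DN_eq_zero_iff i _).mp h0, hiter⟩

lemma mem_Aset_iff (y : ℕ → Bool) : y ∈ Aset ↔ ∃ i, 5 ≤ i ∧ DN i y < i := by
  simp only [Aset, Set.mem_iUnion]
  constructor
  · rintro ⟨i, h5, j, hj, hmem⟩
    have hji : j < 2^i := hj.trans (Nat.lt_two_pow_self (n := i))
    rw [mem_tower_iff hji] at hmem
    exact ⟨i, h5, hmem ▸ hj⟩
  · rintro ⟨i, h5, hlt⟩
    exact ⟨i, h5, DN i y, hlt, (mem_tower_iff (DN_lt i y) y).mpr rfl⟩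

lemma Phi_nat (x : ℕ → Bool) (n : ℕ) :
    (Phi x (n : ℤ) = true) ↔ ∃ i, 5 ≤ i ∧ (DN i x + n) % 2^i < i := by
  have hz : zIter (n : ℤ) x = Tod^[n] x := by
    rw [zIter, if_pos (Int.natCast_nonneg n), Int.toNat_natCast]
  simp only [Phi, decide_eq_true_eq, hz, mem_Aset_iff]
  constructor
  · rintro ⟨i, h5, h⟩
    rw [DN_Tod_iter] at h
    exact ⟨i, h5, h⟩
  · rintro ⟨i, h5, h⟩
    exact ⟨i, h5, by rw [DN_Tod_iter]; exact h⟩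

lemma DN_mod (x : ℕ → Bool) {i j : ℕ} (h : i ≤ j) : DN j x % 2^i = DN i x := by
  induction j with
  | zero =>
    have : i = 0 := Nat.le_zero.mp h
    subst this
    simp [DN]
  | succ j ih =>
    rcases Nat.lt_succ_iff_lt_or_eq.mp (Nat.lt_succ_of_le h) with hij | hij
    · have hij' : i ≤ j := by omega
      rw [DN_succ]
      obtain ⟨c, hc⟩ : (2:ℕ)^i ∣ 2^j * (x j).toNat := (pow_dvd_pow 2 hij').mul_right _
      rw [hc, Nat.add_mul_mod_self_left, ih hij']
    · subst hij
      exact Nat.mod_eq_of_lt (DN_lt _ x)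

lemma modA (i m n : ℕ) (hm : m < 2^i) (hn : n < 2^i) :
    (m + n) % 2^i < i ↔
      (((2^i - m) % 2^i ≤ n ∧ n < (2^i - m) % 2^i + i) ∨ n + 2^i < (2^i - m) % 2^i + i) := by
  have hi : i < 2^i := Nat.lt_two_pow_self (n := i)
  rcases Nat.eq_zero_or_pos m with rfl | hm0
  · rw [Nat.sub_zero, Nat.mod_self, Nat.zero_add, Nat.mod_eq_of_lt hn]
    omega
  · have hr : (2^i - m) % 2^i = 2^i - m := Nat.mod_eq_of_lt (by omega)
    rw [hr]
    rcases lt_or_ge (m + n) (2^i) with h | h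
    · rw [Nat.mod_eq_of_lt h]
      omega
    · rw [Nat.mod_eq_sub_mod h, Nat.mod_eq_of_lt (by omega)]
      omega

lemma r_eq (x : ℕ → Bool) {k i : ℕ} (h : k + 1 ≤ i)
    (hr : (2^i - DN i x) % 2^i < 2^(k+1)) :
    (2^i - DN i x) % 2^i = (2^(k+1) - DN (k+1) x) % 2^(k+1) := by
  set M := 2^(k+1) with hM
  have hMpos : 0 < M := pow_pos (by norm_num) _
  have hdvd : M ∣ 2^i := pow_dvd_pow 2 h
  have key : (2^i - DN i x) % M = (M - DN (k+1) x) % M := by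
    have e3 : DN i x ≡ DN (k+1) x [MOD M] := by
      show DN i x % M = DN (k+1) x % M
      rw [DN_mod x h, Nat.mod_eq_of_lt (DN_lt _ x)]
    have e5 : (2^i - DN i x) + DN i x ≡ (M - DN (k+1) x) + DN (k+1) x [MOD M] := by
      rw [Nat.sub_add_cancel (DN_lt i x).le, Nat.sub_add_cancel (DN_lt (k+1) x).le]
      show 2^i % M = M % M
      obtain ⟨t, ht⟩ := hdvd
      rw [Nat.mod_self, ht, Nat.mul_mod_right]
    have e6 : (2^i - DN i x) + DN i x ≡ (M - DN (k+1) x) + DN i x [MOD M] :=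
      e5.trans ((Nat.ModEq.refl _).add e3.symm)
    exact (Nat.ModEq.add_right_cancel' _ e6)
  calc (2^i - DN i x) % 2^i = ((2^i - DN i x) % 2^i) % M := (Nat.mod_eq_of_lt hr).symm
    _ = (2^i - DN i x) % M := Nat.mod_mod_of_dvd _ hdvd
    _ = (M - DN (k+1) x) % M := key

lemma filter_downward {d : ℕ} (P : ℕ → Prop) [DecidablePred P]
    (hdc : ∀ m n : ℕ, m ≤ n → n < d → P n → P m) :
    ∀ n < d, (P n ↔ n < ((Finset.range d).filter P).card) := by
  intro n hn
  constructor
  · intro hP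
    have hsub : Finset.range (n+1) ⊆ (Finset.range d).filter P := by
      intro t ht
      simp only [Finset.mem_range] at ht
      simp only [Finset.mem_filter, Finset.mem_range]
      exact ⟨by omega, hdc t n (by omega) hn hP⟩
    have h1 := Finset.card_le_card hsub
    rw [Finset.card_range] at h1
    omega
  · intro hcard
    by_contra hP
    have hsub : (Finset.range d).filter P ⊆ Finset.range n := by
      intro t ht
      simp only [Finset.mem_filter, Finset.mem_range] at ht
      simp only [Finset.mem_range]
      by_contra hc
      exact hP (hdc n t (by omega) ht.1 ht.2)
    have h1 := Finset.card_le_card hsub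
    rw [Finset.card_range] at h1
    omega

lemma filter_interval {d b : ℕ} (P : ℕ → Prop) [DecidablePred P]
    (hlb : ∀ n, n < d → P n → b ≤ n)
    (hdc : ∀ m n : ℕ, b ≤ m → m ≤ n → n < d → P n → P m) :
    ∀ n < d, (P n ↔ b ≤ n ∧ n < b + ((Finset.range d).filter P).card) := by
  intro n hn
  constructor
  · intro hP
    refine ⟨hlb n hn hP, ?_⟩
    have hsub : Finset.Icc b n ⊆ (Finset.range d).filter P := by
      intro t ht
      simp only [Finset.mem_Icc] at ht
      simp only [Finset.mem_filter, Finset.mem_range]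
      exact ⟨by omega, hdc t n ht.1 ht.2 hn hP⟩
    have h1 := Finset.card_le_card hsub
    rw [Nat.card_Icc] at h1
    have hbn := hlb n hn hP
    omega
  · rintro ⟨hbn, hcard⟩
    by_contra hP
    have hsub : (Finset.range d).filter P ⊆ Finset.Ico b n := by
      intro t ht
      simp only [Finset.mem_filter, Finset.mem_range] at ht
      simp only [Finset.mem_Ico]
      refine ⟨hlb t ht.1 ht.2, ?_⟩
      by_contra hc
      exact hP (hdc n t hbn (by omega) ht.1 ht.2)
    have h1 := Finset.card_le_card hsub
    rw [Nat.card_Ico] at h1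
    omega

end Aux

/-- the number of words of length `d` in the language of `Y` is at most
`2(d+1)^3`. -/
theorem stmt12 (d : ℕ) :
    {w : Fin d → Bool | ∃ z ∈ Ysub, ∀ i : Fin d, z ((i : ℕ) : ℤ) = w i}.ncard
      ≤ 2 * (d + 1) ^ 3 := by
  classical
  set k := Nat.log 2 d with hk
  set K := max (k+2) 5 with hKdef
  have hdlt : d < 2^(k+1) := Nat.lt_pow_succ_log_self (by norm_num) d
  set G : ℕ × ℕ × ℕ → (Fin d → Bool) := fun p => fun n =>
    (decide (∃ i ∈ Finset.Ico 5 K, (p.1 + (n:ℕ)) % 2^i < i) ||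
     decide ((n:ℕ) < p.2.1)) ||
    decide ((2^(k+1) - p.1) % 2^(k+1) ≤ (n:ℕ) ∧ (n:ℕ) < p.2.2) with hG
  set T : Finset (ℕ × ℕ × ℕ) :=
    (Finset.range (2^(k+1))) ×ˢ ((Finset.range (d+1)) ×ˢ (Finset.range (d+1))) with hT
  have hsub : {w : Fin d → Bool | ∃ z ∈ Ysub, ∀ i : Fin d, z ((i : ℕ) : ℤ) = w i}
      ⊆ ↑(T.image G) := by
    rintro w ⟨z, hzY, hzw⟩
    have hzY' : z ∈ closure (Set.range Phi) := hzY
    obtain ⟨x, hx⟩ : ∃ x, ∀ i : Fin d, Phi x ((i:ℕ):ℤ) = w i := by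
      have hU : IsOpen {z' : ℤ → Bool | ∀ i : Fin d, z' ((i:ℕ):ℤ) = z ((i:ℕ):ℤ)} := by
        have he : {z' : ℤ → Bool | ∀ i : Fin d, z' ((i:ℕ):ℤ) = z ((i:ℕ):ℤ)}
            = ⋂ i : Fin d, (fun z' : ℤ → Bool => z' ((i:ℕ):ℤ)) ⁻¹' {z ((i:ℕ):ℤ)} := by
          ext z'; simp [Set.mem_iInter]
        rw [he]
        exact isOpen_iInter_of_finite fun i =>
          (continuous_apply _).isOpen_preimage _ (isOpen_discrete _)
      obtain ⟨z', hz'U, x, rfl⟩ := mem_closure_iff.mp hzY' _ hU (fun i => rfl)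
      exact ⟨x, fun i => (hz'U i).trans (hzw i)⟩
    set c := DN (k+1) x with hc
    set b := (2^(k+1) - c) % 2^(k+1) with hb
    have hcb : c < 2^(k+1) := DN_lt _ x
    have hKk : k+2 ≤ K := le_max_left _ _
    have hK5 : 5 ≤ K := le_max_right _ _
    have hdi : ∀ i, K ≤ i → d < 2^i := fun i hi =>
      lt_of_lt_of_le hdlt (Nat.pow_le_pow_right (by norm_num) (by omega))
    have hrb : ∀ i, K ≤ i → (2^i - DN i x) % 2^i < d → (2^i - DN i x) % 2^i = b := by
      intro i hi hrd
      exact r_eq x (show k+1 ≤ i by omega) (lt_trans hrd hdlt)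
    set Ppre : ℕ → Prop := fun n => ∃ i, K ≤ i ∧ n + 2^i < (2^i - DN i x) % 2^i + i
      with hPpre
    set Pint : ℕ → Prop :=
      fun n => ∃ i, K ≤ i ∧ (2^i - DN i x) % 2^i ≤ n ∧ n < (2^i - DN i x) % 2^i + i
      with hPint
    set a := ((Finset.range d).filter Ppre).card with ha
    set e := min d (b + ((Finset.range d).filter Pint).card) with he
    -- interval characterizations
    have hApre : ∀ n < d, (Ppre n ↔ n < a) := by
      refine filter_downward Ppre ?_
      rintro m n hmn hnd ⟨i, hKi, hlt⟩
      exact ⟨i, hKi, by omega⟩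
    have hlb : ∀ n, n < d → Pint n → b ≤ n := by
      rintro n hn ⟨i, hKi, h1, h2⟩
      have := hrb i hKi (lt_of_le_of_lt h1 hn)
      omega
    have hAint : ∀ n < d, (Pint n ↔ b ≤ n ∧ n < b + ((Finset.range d).filter Pint).card) := by
      refine filter_interval Pint hlb ?_
      rintro m n hbm hmn hnd ⟨i, hKi, h1, h2⟩
      have := hrb i hKi (lt_of_le_of_lt h1 hnd)
      exact ⟨i, hKi, by omega, by omega⟩
    -- main pointwise characterization
    have hmain : ∀ n : ℕ, n < d →
        ((∃ i, 5 ≤ i ∧ (DN i x + n) % 2^i < i) ↔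
          ((∃ i ∈ Finset.Ico 5 K, (c + n) % 2^i < i) ∨ n < a ∨ (b ≤ n ∧ n < e))) := by
      intro n hn
      have hsmall : ∀ i, 5 ≤ i → i < K →
          ((DN i x + n) % 2^i < i ↔ (c + n) % 2^i < i) := by
        intro i h5 hiK
        have hik : i ≤ k+1 := by
          rcases lt_max_iff.mp hiK with h | h
          · omega
          · omega
        have : c % 2^i = DN i x := DN_mod x hik
        rw [← this, Nat.mod_add_mod]
      have hlarge : ∀ i, K ≤ i →
          ((DN i x + n) % 2^i < i ↔
            (((2^i - DN i x) % 2^i ≤ n ∧ n < (2^i - DN i x) % 2^i + i) ∨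
              n + 2^i < (2^i - DN i x) % 2^i + i)) := by
        intro i hKi
        exact modA i (DN i x) n (DN_lt i x) (lt_trans hn (hdi i hKi))
      have hint_e : (b ≤ n ∧ n < b + ((Finset.range d).filter Pint).card) ↔ (b ≤ n ∧ n < e) := by
        rw [he]
        omega
      constructor
      · rintro ⟨i, h5, hC⟩
        rcases lt_or_ge i K with hiK | hiK
        · exact Or.inl ⟨i, Finset.mem_Ico.mpr ⟨h5, hiK⟩, (hsmall i h5 hiK).mp hC⟩
        · rcases (hlarge i hiK).mp hC with h | h
          · exact Or.inr (Or.inr (hint_e.mp ((hAint n hn).mp ⟨i, hiK, h.1, h.2⟩)))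
          · exact Or.inr (Or.inl ((hApre n hn).mp ⟨i, hiK, h⟩))
      · rintro (⟨i, hmem, hCc⟩ | hna | hbe)
        · obtain ⟨h5, hiK⟩ := Finset.mem_Ico.mp hmem
          exact ⟨i, h5, (hsmall i h5 hiK).mpr hCc⟩
        · obtain ⟨i, hKi, hlt⟩ := (hApre n hn).mpr hna
          exact ⟨i, by omega, (hlarge i hKi).mpr (Or.inr hlt)⟩
        · obtain ⟨i, hKi, h1, h2⟩ := (hAint n hn).mpr (hint_e.mpr hbe)
          exact ⟨i, by omega, (hlarge i hKi).mpr (Or.inl ⟨h1, h2⟩)⟩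
    -- membership
    refine Finset.mem_coe.mpr (Finset.mem_image.mpr ⟨(c, a, e), ?_, ?_⟩)
    · rw [hT]
      refine Finset.mem_product.mpr ⟨Finset.mem_range.mpr hcb,
        Finset.mem_product.mpr ⟨Finset.mem_range.mpr ?_, Finset.mem_range.mpr ?_⟩⟩
      · show a < d + 1
        have h1 := Finset.card_filter_le (Finset.range d) Ppre
        rw [Finset.card_range] at h1
        omega
      · show e < d + 1
        rw [he]
        omega
    · funext n
      rw [← hx n]
      apply Bool.eq_iff_iff.mpr
      rw [hG]
      simp only [Bool.or_eq_true, decide_eq_true_eq]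
      rw [Phi_nat x (n : ℕ)]
      rw [hmain (n : ℕ) n.isLt]
      rw [← hb]
      exact or_assoc
  have h2k : 2^(k+1) ≤ 2*(d+1) := by
    rcases Nat.eq_zero_or_pos d with rfl | hd
    · simp [hk]
    · have h1 : 2^k ≤ d := Nat.pow_log_le_self 2 (by omega)
      rw [pow_succ]
      omega
  have hcard : {w : Fin d → Bool | ∃ z ∈ Ysub, ∀ i : Fin d, z ((i : ℕ) : ℤ) = w i}.ncard
      ≤ (T.image G).card := by
    rw [← Set.ncard_coe_finset]
    exact Set.ncard_le_ncard hsub (T.image G).finite_toSet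
  have hTcard : T.card = 2^(k+1) * ((d+1) * (d+1)) := by
    rw [hT, Finset.card_product, Finset.card_product]
    simp
  calc {w : Fin d → Bool | ∃ z ∈ Ysub, ∀ i : Fin d, z ((i : ℕ) : ℤ) = w i}.ncard
      ≤ (T.image G).card := hcard
    _ ≤ T.card := Finset.card_image_le
    _ = 2^(k+1) * ((d+1) * (d+1)) := hTcard
    _ ≤ (2*(d+1)) * ((d+1) * (d+1)) := Nat.mul_le_mul_right _ h2k
    _ = 2 * (d+1)^3 := by ring
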